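/- Let K be a perfect field of characteristic p > 0, S = K[x_1,...,x_n], and Φ : F_*S → S the S-linear map sending F_*(x_1^{p-1}...x_n^{p-1}) to 1 and all other standard basis monomials F_*(x^α), α ∈ {0,...,p-1}^n, to 0. If f ∈ S is written as F_*f = Σ_{α ∈ {0,...,p-1}^n} s_α · F_*(x^α) with s_α ∈ S (i.e., f = Σ_α s_α^p x^α), then the image Φ(F_*(f·S)) of the ideal generated by f under Φ equals the ideal of S generated by all the coefficients s_α. -/

import Mathlib

open MvPolynomial

/-- For `F_*S` free over `S = K[x_1,…,x_n]` with basis `{F_*(x^α) : α ∈ {0,…,p-1}^n}`,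
`frobCoeff p α f` is the coefficient `s_α ∈ S` in the expansion
`F_*f = Σ_α s_α • F_*(x^α)`, i.e. `f = Σ_α s_α^p x^α`. -/
noncomputable def frobCoeff {K : Type*} [Field K] (p : ℕ) [Fact p.Prime] [ExpChar K p]
    [PerfectRing K p] {n : ℕ} (α : Fin n → ℕ) (f : MvPolynomial (Fin n) K) :
    MvPolynomial (Fin n) K :=
  ∑ d ∈ f.support,
    if ∀ i, d i % p = α i then
      monomial (Finsupp.mapRange (· / p) (Nat.zero_div p) d)
        ((frobeniusEquiv K p).symm (f.coeff d))
    else 0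

/-- The generating trace map `Φ : F_*S → S`, the `S`-linear projection onto the
coefficient of `F_*(x_1^(p-1) ⋯ x_n^(p-1))`. -/
noncomputable def phi {K : Type*} [Field K] (p : ℕ) [Fact p.Prime] [ExpChar K p]
    [PerfectRing K p] {n : ℕ} (f : MvPolynomial (Fin n) K) : MvPolynomial (Fin n) K :=
  frobCoeff p (fun _ => p - 1) f

/-- The ideal `Φ(F_*(f•S)) = {Φ(F_*(f•h)) : h ∈ S}`, which computes the test ideal
`τ(S, f^(1/p))`. -/
noncomputable def tauP {K : Type*} [Field K] (p : ℕ) [Fact p.Prime] [ExpChar K p]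
    [PerfectRing K p] {n : ℕ} (f : MvPolynomial (Fin n) K) : Ideal (MvPolynomial (Fin n) K) :=
  Ideal.span {g | ∃ h, g = phi p (f * h)}

section Aux

variable {K : Type*} [Field K] (p : ℕ) [Fact p.Prime] [ExpChar K p] [PerfectRing K p] {n : ℕ}

lemma charP_mv : CharP (MvPolynomial (Fin n) K) p := by
  have hK : CharP K p := by
    rcases ‹ExpChar K p› with _ | h
    · exact absurd (Fact.out : Nat.Prime 1) (by norm_num)
    · assumption
  exact charP_of_injective_ringHom (C_injective (Fin n) K) p

lemma coeff_frobCoeff (α : Fin n → ℕ) (hα : ∀ i, α i < p) (f : MvPolynomial (Fin n) K)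
    (e : Fin n →₀ ℕ) :
    (frobCoeff p α f).coeff e =
      (frobeniusEquiv K p).symm (f.coeff (p • e + Finsupp.equivFunOnFinite.symm α)) := by
  classical
  have hp : 0 < p := (Fact.out : p.Prime).pos
  set D : Fin n →₀ ℕ := p • e + Finsupp.equivFunOnFinite.symm α with hD
  have hDi : ∀ i, D i = p * e i + α i := by
    intro i; simp [hD, mul_comm]
  unfold frobCoeff
  rw [MvPolynomial.coeff_sum]
  have key : ∀ d ∈ f.support,
      ((if ∀ i, d i % p = α i then
          monomial (Finsupp.mapRange (· / p) (Nat.zero_div p) d)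
            ((frobeniusEquiv K p).symm (f.coeff d)) else 0).coeff e)
        = if d = D then (frobeniusEquiv K p).symm (f.coeff d) else 0 := by
    intro d _
    split_ifs with h1 h2 h3
    · subst h2
      rw [coeff_monomial, if_pos]
      ext i
      rw [Finsupp.mapRange_apply, hDi i, Nat.mul_add_div hp, Nat.div_eq_of_lt (hα i),
        add_zero]
    · rw [coeff_monomial, if_neg]
      intro hme
      apply h2
      ext i
      have h3 : d i / p = e i := by
        rw [← hme]; simp [Finsupp.mapRange_apply]
      rw [hDi i, ← h3, ← h1 i, Nat.div_add_mod]
    · exact absurd (fun i => by rw [h3, hDi i, Nat.mul_add_mod, Nat.mod_eq_of_lt (hα i)]) h1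
    · rfl
  rw [Finset.sum_congr rfl key, Finset.sum_ite_eq' f.support D]
  split_ifs with h
  · rfl
  · rw [MvPolynomial.notMem_support_iff.mp h, map_zero]

lemma coeff_phi (f : MvPolynomial (Fin n) K) (e : Fin n →₀ ℕ) :
    (phi p f).coeff e =
      (frobeniusEquiv K p).symm
        (f.coeff (p • e + Finsupp.equivFunOnFinite.symm fun _ => p - 1)) := by
  exact coeff_frobCoeff p _ (fun _ => Nat.sub_lt (Fact.out : p.Prime).pos one_pos) f e

lemma phi_add (f g : MvPolynomial (Fin n) K) : phi p (f + g) = phi p f + phi p g := by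
  ext e
  simp [coeff_phi, coeff_add]

lemma phi_zero : phi p (0 : MvPolynomial (Fin n) K) = 0 := by
  ext e
  simp [coeff_phi]

omit [Fact p.Prime] [ExpChar K p] [PerfectRing K p] in
lemma smul_sub_aux {b e : Fin n →₀ ℕ} (hbe : b ≤ e) :
    (p • e + Finsupp.equivFunOnFinite.symm fun _ => p - 1) - p • b =
      p • (e - b) + Finsupp.equivFunOnFinite.symm fun _ => p - 1 := by
  ext i
  have hbei := hbe i
  rw [Finsupp.tsub_apply, Finsupp.add_apply, Finsupp.add_apply, Finsupp.smul_apply,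
    Finsupp.smul_apply, Finsupp.smul_apply, Finsupp.tsub_apply]
  simp only [Finsupp.coe_equivFunOnFinite_symm, smul_eq_mul]
  obtain ⟨k, hk⟩ := Nat.exists_eq_add_of_le hbei
  rw [hk, mul_add, Nat.add_sub_cancel_left]
  omega

lemma smul_le_aux {b e : Fin n →₀ ℕ} :
    p • b ≤ p • e + Finsupp.equivFunOnFinite.symm (fun _ => p - 1) ↔ b ≤ e := by
  have hp : 0 < p := (Fact.out : p.Prime).pos
  constructor
  · intro h i
    have hi := h i
    rw [Finsupp.add_apply, Finsupp.smul_apply, Finsupp.smul_apply] at hi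
    simp only [Finsupp.coe_equivFunOnFinite_symm, smul_eq_mul] at hi
    by_contra hc
    push_neg at hc
    have : p * (e i + 1) ≤ p * b i := Nat.mul_le_mul_left p hc
    have h3 : p * (e i + 1) = p * e i + p := by ring
    omega
  · intro h i
    rw [Finsupp.add_apply, Finsupp.smul_apply, Finsupp.smul_apply]
    simp only [Finsupp.coe_equivFunOnFinite_symm, smul_eq_mul]
    exact le_trans (Nat.mul_le_mul_left p (h i)) (Nat.le_add_right _ _)

lemma phi_pow_mul (g f : MvPolynomial (Fin n) K) : phi p (g ^ p * f) = g * phi p f := by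
  haveI := charP_mv (K := K) (p := p) (n := n)
  induction g using MvPolynomial.induction_on' with
  | add a b ha hb =>
    rw [add_pow_char, add_mul, phi_add, ha, hb, add_mul]
  | monomial d c =>
    rw [monomial_pow]
    ext e
    rw [coeff_phi, coeff_monomial_mul', coeff_monomial_mul',
      apply_ite ((frobeniusEquiv K p).symm)]
    by_cases h : d ≤ e
    · rw [if_pos ((smul_le_aux p).mpr h), if_pos h, smul_sub_aux p h, map_mul, coeff_phi]
      congr 1
      exact (frobeniusEquiv K p).symm_apply_apply c
    · rw [if_neg (fun hc => h ((smul_le_aux p).mp hc)), if_neg h, map_zero]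

lemma prod_X_pow_eq (g : Fin n → ℕ) :
    (∏ i, (X i : MvPolynomial (Fin n) K) ^ g i) =
      monomial (Finsupp.equivFunOnFinite.symm g) 1 := by
  classical
  rw [← prod_X_pow_eq_monomial]
  refine (Finset.prod_subset (Finset.subset_univ _) ?_).symm
  intro i _ hi
  rw [Finsupp.notMem_support_iff] at hi
  simp only [Finsupp.coe_equivFunOnFinite_symm] at hi ⊢
  rw [hi, pow_zero]

lemma phi_basis_pair (a b : Fin n → Fin p) :
    phi p ((∏ i, (X i : MvPolynomial (Fin n) K) ^ (a i : ℕ)) *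
        ∏ i, (X i : MvPolynomial (Fin n) K) ^ (p - 1 - (b i : ℕ))) =
      if a = b then 1 else 0 := by
  classical
  have hp : 0 < p := (Fact.out : p.Prime).pos
  rw [prod_X_pow_eq, prod_X_pow_eq, monomial_mul, one_mul]
  ext e
  rw [coeff_phi, coeff_monomial]
  have hcond : (Finsupp.equivFunOnFinite.symm (fun i => (a i : ℕ)) +
        Finsupp.equivFunOnFinite.symm fun i => p - 1 - (b i : ℕ)) =
        (p • e + Finsupp.equivFunOnFinite.symm fun _ => p - 1) ↔ a = b ∧ e = 0 := by
    rw [Finsupp.ext_iff]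
    constructor
    · intro h
      have key : ∀ i, a i = b i ∧ e i = 0 := by
        intro i
        have hi := h i
        rw [Finsupp.add_apply, Finsupp.add_apply, Finsupp.smul_apply] at hi
        simp only [Finsupp.coe_equivFunOnFinite_symm, smul_eq_mul] at hi
        have ha := (a i).isLt
        have hb := (b i).isLt
        have hpe : (e i = 0 ∧ p * e i = 0) ∨ p ≤ p * e i := by
          rcases Nat.eq_zero_or_pos (e i) with h0 | h0
          · exact Or.inl ⟨h0, by rw [h0, Nat.mul_zero]⟩
          · exact Or.inr (Nat.le_mul_of_pos_right p h0)
        constructor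
        · apply Fin.ext; omega
        · omega
      exact ⟨funext fun i => (key i).1, Finsupp.ext fun i => (key i).2⟩
    · rintro ⟨rfl, rfl⟩ i
      rw [Finsupp.add_apply, Finsupp.add_apply, Finsupp.smul_apply]
      simp only [Finsupp.coe_equivFunOnFinite_symm, Finsupp.coe_zero,
        Pi.zero_apply, smul_eq_mul, Nat.mul_zero, zero_add]
      have ha := (a i).isLt
      omega
  split_ifs with h1 h2 h3
  · obtain ⟨-, rfl⟩ := hcond.mp h1
    rw [MvPolynomial.coeff_one, if_pos rfl, map_one]
  · exact absurd (hcond.mp h1).1 h2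
  · rw [map_zero, MvPolynomial.coeff_one,
      if_neg (fun he => h1 (hcond.mpr ⟨h3, he.symm⟩))]
  · rw [map_zero, MvPolynomial.coeff_zero]

/-- `phi p` as an additive monoid hom. -/
noncomputable def phiHom : MvPolynomial (Fin n) K →+ MvPolynomial (Fin n) K :=
  AddMonoidHom.mk' (phi p) (phi_add p)

lemma phi_sum {ι : Type*} (t : Finset ι) (g : ι → MvPolynomial (Fin n) K) :
    phi p (∑ i ∈ t, g i) = ∑ i ∈ t, phi p (g i) :=
  map_sum (phiHom p) g t

end Aux

/-- if `f = Σ_{α ∈ {0,…,p-1}^n} s_α^p x^α`, then the image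
`Φ(F_*(f·S)) = {Φ(F_*(f·h)) : h ∈ S}` equals the ideal generated by the coefficients `s_α`. -/
theorem statement1 {K : Type*} [Field K] (p : ℕ) [Fact p.Prime] [ExpChar K p]
    [PerfectRing K p] (n : ℕ) (f : MvPolynomial (Fin n) K)
    (s : (Fin n → Fin p) → MvPolynomial (Fin n) K)
    (hf : f = ∑ α : Fin n → Fin p, s α ^ p * ∏ i, X i ^ (α i : ℕ)) :
    {g | ∃ h, g = phi p (f * h)} =
      (Ideal.span (Set.range s) : Set (MvPolynomial (Fin n) K)) := by
  classical
  have expand : ∀ h : MvPolynomial (Fin n) K,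
      phi p (f * h) = ∑ α : Fin n → Fin p, s α * phi p ((∏ i, X i ^ (α i : ℕ)) * h) := by
    intro h
    rw [hf, Finset.sum_mul]
    rw [phi_sum]
    refine Finset.sum_congr rfl fun α _ => ?_
    rw [mul_assoc, phi_pow_mul]
  apply Set.Subset.antisymm
  · rintro g ⟨h, rfl⟩
    rw [expand h]
    exact Ideal.sum_mem _ fun α _ =>
      Ideal.mul_mem_right _ _ (Ideal.subset_span ⟨α, rfl⟩)
  · -- the LHS set is an ideal containing each `s α`
    let I : Ideal (MvPolynomial (Fin n) K) :=
      { carrier := {g | ∃ h, g = phi p (f * h)}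
        add_mem' := by
          rintro a b ⟨ha, rfl⟩ ⟨hb, rfl⟩
          exact ⟨ha + hb, by rw [mul_add, phi_add]⟩
        zero_mem' := ⟨0, by rw [mul_zero, phi_zero]⟩
        smul_mem' := by
          rintro c a ⟨h, rfl⟩
          refine ⟨c ^ p * h, ?_⟩
          rw [smul_eq_mul, show f * (c ^ p * h) = c ^ p * (f * h) by ring, phi_pow_mul] }
    have hsub : Ideal.span (Set.range s) ≤ I := by
      rw [Ideal.span_le]
      rintro - ⟨α, rfl⟩
      refine ⟨∏ i, X i ^ (p - 1 - (α i : ℕ)), ?_⟩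
      rw [expand]
      rw [Finset.sum_congr rfl fun β _ => by rw [phi_basis_pair p β α]]
      simp [Finset.sum_ite_eq']
    exact fun g hg => hsub hg
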